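/- (Theorem 3, part 2, sure screening, fixed-sample form) In addition to the hypotheses of the fixed-sample deviation bound — namely: n ≥ 1, q ≥ 0, finite M with |M| = w, constants M₀ > 0, c₂ > 0, K₂ > 0, 0 < κ < 1/2, 0 < ε₁ ≤ n^{−κ}/2, ε₂ ≥ 0, n^{−κ} ≤ 6/(K₂ M₀ c₂); for each j ∈ M: θ_j ∈ ℝ^{q+1} fixed and θ̂_j random with V̂_j(θ̂_j) = 0 a.s., M₀‖θ̂_j − θ_j‖₂ ≤ ‖V̂_j(θ̂_j) − V̂_j(θ_j)‖₂ a.s., V̂_j(θ_j) = (1/n)Σ_{i=1}^n W_{i,j} + Δ_j with W_{1,j},…,W_{n,j} i.i.d. mean-zero with coordinates bounded by K₂ a.s., and P(∃ j ∈ M: ‖Δ_j‖₂ > M₀c₂ε₁/2) ≤ ε₂ — assume further that the last coordinate β_j of θ_j satisfies |β_j| ≥ c₂ n^{−κ} for every j ∈ M. Then, with threshold γ_n := (c₂/4) n^{−κ} and β̂_j the last coordinate of θ̂_j, P( min_{j∈M} |β̂_j| > γ_n ) ≥ 1 − 2 w (q+1) exp(−c₃ n^{1−2κ}) − ε₂,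 where c₃ := M₀² c₂² / (32 (q+1) (K₂² + 1)); that is, with this probability every index in M survives the screening threshold γ_n. -/

import Mathlib

open MeasureTheory ProbabilityTheory

open Real
open scoped ENNReal


lemma css_exp_le (K t x : ℝ) (hK : 0 < K) (hx : |x| ≤ K) :
    exp (t * x) ≤ cosh (t * K) + (sinh (t * K) / K) * x := by
  obtain ⟨hx1, hx2⟩ := abs_le.1 hx
  have h2K : (0:ℝ) < 2 * K := by linarith
  have key := convexOn_exp.2 (Set.mem_univ (t * (-K))) (Set.mem_univ (t * K))
    (show (0:ℝ) ≤ (K - x) / (2 * K) from div_nonneg (by linarith) (by linarith))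
    (show (0:ℝ) ≤ (K + x) / (2 * K) from div_nonneg (by linarith) (by linarith))
    (show (K - x) / (2 * K) + (K + x) / (2 * K) = 1 by
      rw [← add_div, div_eq_one_iff_eq h2K.ne']; ring)
  simp only [smul_eq_mul] at key
  have harg : (K - x) / (2 * K) * (t * (-K)) + (K + x) / (2 * K) * (t * K) = t * x := by
    rw [div_mul_eq_mul_div, div_mul_eq_mul_div, ← add_div, div_eq_iff h2K.ne']; ring
  rw [harg] at key
  refine key.trans (le_of_eq ?_)
  rw [Real.cosh_eq, Real.sinh_eq]
  have h1 : t * (-K) = -(t * K) := by ring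
  rw [h1]
  field_simp
  ring

lemma css_mgf_le {Ω : Type*} [MeasurableSpace Ω] {μ : Measure Ω} [IsProbabilityMeasure μ]
    {X : Ω → ℝ} (hX : AEStronglyMeasurable X μ) {K : ℝ} (hK : 0 < K)
    (hb : ∀ᵐ ω ∂μ, |X ω| ≤ K) (hm : ∫ ω, X ω ∂μ = 0) (t : ℝ) :
    mgf X μ t ≤ exp (t ^ 2 * K ^ 2 / 2) := by
  have hXint : Integrable X μ := by
    refine (integrable_const K).mono' hX ?_
    filter_upwards [hb] with ω h using by simpa using h
  have hexp_int : Integrable (fun ω => exp (t * X ω)) μ := by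
    refine (integrable_const (exp (|t| * K))).mono' ?_ ?_
    · exact (Real.continuous_exp.comp_aestronglyMeasurable (hX.const_mul t))
    · filter_upwards [hb] with ω h
      rw [Real.norm_eq_abs, Real.abs_exp]
      refine Real.exp_le_exp.2 ?_
      calc t * X ω ≤ |t * X ω| := le_abs_self _
        _ = |t| * |X ω| := abs_mul _ _
        _ ≤ |t| * K := by gcongr
  have hrhs_int : Integrable (fun ω => cosh (t * K) + (sinh (t * K) / K) * X ω) μ :=
    (integrable_const _).add (hXint.const_mul _)
  have hle : mgf X μ t ≤ ∫ ω, (cosh (t * K) + (sinh (t * K) / K) * X ω) ∂μ := by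
    refine integral_mono_ae hexp_int hrhs_int ?_
    filter_upwards [hb] with ω h using css_exp_le K t (X ω) hK h
  rw [integral_add (integrable_const _) (hXint.const_mul _), integral_const_mul, hm,
    mul_zero, add_zero, integral_const, probReal_univ, smul_eq_mul,
    one_mul] at hle
  refine hle.trans ((Real.cosh_le_exp_half_sq (t * K)).trans (le_of_eq ?_))
  congr 1
  ring

lemma css_chernoff_one {Ω : Type*} [MeasurableSpace Ω] {μ : Measure Ω} [IsProbabilityMeasure μ]
    {n : ℕ} (hn : 0 < n) {X : Fin n → Ω → ℝ} (hmeas : ∀ i, Measurable (X i))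
    (hind : iIndepFun X μ) {K : ℝ} (hK : 0 < K)
    (hb : ∀ i, ∀ᵐ ω ∂μ, |X i ω| ≤ K) (hm : ∀ i, ∫ ω, X i ω ∂μ = 0)
    {s : ℝ} (hs : 0 ≤ s) :
    μ {ω | s ≤ ∑ i, X i ω} ≤ ENNReal.ofReal (exp (-(s ^ 2) / (2 * n * K ^ 2))) := by
  set t : ℝ := s / (n * K ^ 2) with ht_def
  have hnR : (0:ℝ) < n := by exact_mod_cast hn
  have ht : 0 ≤ t := div_nonneg hs (by positivity)
  have hball : ∀ᵐ ω ∂μ, ∀ i, |X i ω| ≤ K := ae_all_iff.mpr hb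
  have hsum_int : Integrable (fun ω => exp (t * ∑ i, X i ω)) μ := by
    refine (integrable_const (exp (|t| * (n * K)))).mono' ?_ ?_
    · refine (Real.continuous_exp.comp_aestronglyMeasurable ?_)
      exact ((Finset.measurable_sum Finset.univ fun i _ => hmeas i).const_mul t).aestronglyMeasurable
    · filter_upwards [hball] with ω h
      rw [Real.norm_eq_abs, Real.abs_exp]
      refine Real.exp_le_exp.2 ?_
      calc t * ∑ i, X i ω ≤ |t * ∑ i, X i ω| := le_abs_self _
        _ = |t| * |∑ i, X i ω| := abs_mul _ _
        _ ≤ |t| * (n * K) := by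
            gcongr
            refine (Finset.abs_sum_le_sum_abs _ _).trans ?_
            calc ∑ i, |X i ω| ≤ ∑ _i : Fin n, K := Finset.sum_le_sum fun i _ => h i
              _ = n * K := by simp [mul_comm]
  have key := measure_ge_le_exp_mul_mgf (μ := μ) (X := ∑ i, X i) s ht
    (by simpa only [Finset.sum_apply] using hsum_int)
  have hmgf : mgf (∑ i, X i) μ t ≤ exp (n * (t ^ 2 * K ^ 2 / 2)) := by
    rw [hind.mgf_sum hmeas]
    calc ∏ i, mgf (X i) μ t ≤ ∏ _i : Fin n, exp (t ^ 2 * K ^ 2 / 2) := by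
          refine Finset.prod_le_prod (fun i _ => mgf_nonneg) fun i _ => ?_
          exact css_mgf_le (hmeas i).aestronglyMeasurable hK (hb i) (hm i) t
      _ = exp (n * (t ^ 2 * K ^ 2 / 2)) := by
          rw [Finset.prod_const, ← Real.exp_nat_mul]; simp
  have hset : {ω | s ≤ ∑ i, X i ω} = {ω | s ≤ (∑ i, X i) ω} := by
    ext ω; simp [Finset.sum_apply]
  have hexp_eq : exp (-t * s) * exp (n * (t ^ 2 * K ^ 2 / 2))
      = exp (-(s ^ 2) / (2 * n * K ^ 2)) := by
    rw [← Real.exp_add]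
    congr 1
    rw [ht_def]
    field_simp
    ring
  have hfin : (μ {ω | s ≤ ∑ i, X i ω}).toReal ≤ exp (-(s ^ 2) / (2 * n * K ^ 2)) := by
    rw [hset]
    refine key.trans ?_
    rw [← hexp_eq]
    exact mul_le_mul_of_nonneg_left hmgf (exp_pos _).le
  rwa [ENNReal.le_ofReal_iff_toReal_le (measure_ne_top μ _) (exp_pos _).le]

lemma css_chernoff_abs {Ω : Type*} [MeasurableSpace Ω] {μ : Measure Ω} [IsProbabilityMeasure μ]
    {n : ℕ} (hn : 0 < n) {X : Fin n → Ω → ℝ} (hmeas : ∀ i, Measurable (X i))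
    (hind : iIndepFun X μ) {K : ℝ} (hK : 0 < K)
    (hb : ∀ i, ∀ᵐ ω ∂μ, |X i ω| ≤ K) (hm : ∀ i, ∫ ω, X i ω ∂μ = 0)
    {s : ℝ} (hs : 0 ≤ s) :
    μ {ω | s < |∑ i, X i ω|} ≤ ENNReal.ofReal (2 * exp (-(s ^ 2) / (2 * n * K ^ 2))) := by
  have hneg : μ {ω | s ≤ ∑ i, (-(X i ω))} ≤ ENNReal.ofReal (exp (-(s ^ 2) / (2 * n * K ^ 2))) := by
    refine css_chernoff_one hn (X := fun i => -(X i)) (fun i => (hmeas i).neg) ?_ hK ?_ ?_ hs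
    · exact hind.comp (fun _ => Neg.neg) (fun _ => measurable_neg)
    · intro i; filter_upwards [hb i] with ω h; simpa using h
    · intro i; simp [integral_neg, hm i]
  have hpos := css_chernoff_one hn hmeas hind hK hb hm hs
  have hsub : {ω | s < |∑ i, X i ω|} ⊆ {ω | s ≤ ∑ i, X i ω} ∪ {ω | s ≤ ∑ i, (-(X i ω))} := by
    intro ω hω
    simp only [Set.mem_setOf_eq] at hω
    rcases abs_cases (∑ i, X i ω) with ⟨h1, _⟩ | ⟨h1, _⟩
    · left; exact le_of_lt (h1 ▸ hω)
    · right
      simp only [Set.mem_setOf_eq]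
      have hsum : (∑ i, -(X i ω)) = -∑ i, X i ω := by
        rw [← Finset.sum_neg_distrib]
      rw [hsum, ← h1]
      exact le_of_lt hω
  calc μ {ω | s < |∑ i, X i ω|} ≤ μ ({ω | s ≤ ∑ i, X i ω} ∪ {ω | s ≤ ∑ i, (-(X i ω))}) :=
        measure_mono hsub
    _ ≤ μ {ω | s ≤ ∑ i, X i ω} + μ {ω | s ≤ ∑ i, (-(X i ω))} := measure_union_le _ _
    _ ≤ ENNReal.ofReal (exp (-(s ^ 2) / (2 * n * K ^ 2)))
        + ENNReal.ofReal (exp (-(s ^ 2) / (2 * n * K ^ 2))) := add_le_add hpos hneg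
    _ = ENNReal.ofReal (2 * exp (-(s ^ 2) / (2 * n * K ^ 2))) := by
        rw [← ENNReal.ofReal_add (exp_pos _).le (exp_pos _).le]; ring_nf

lemma css_iIndepFun_ae_eq {Ω : Type*} [MeasurableSpace Ω] {μ : Measure Ω} {n : ℕ}
    {β : Type*} [MeasurableSpace β] {f g : Fin n → Ω → β}
    (hfg : ∀ i, f i =ᵐ[μ] g i)
    (hf : iIndepFun f μ) :
    iIndepFun g μ := by
  rw [iIndepFun_iff] at hf ⊢
  intro s f' H
  have hae : ∀ᵐ ω ∂μ, ∀ i, f i ω = g i ω := ae_all_iff.mpr hfg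
  choose A hA hA' using fun i (hi : i ∈ s) => H i hi
  classical
  set F : Fin n → Set Ω := fun i => if hi : i ∈ s then f i ⁻¹' A i hi else ∅ with hF
  have hFae : ∀ i ∈ s, f' i =ᵐ[μ] F i := by
    intro i hi
    rw [Filter.eventuallyEq_set]
    filter_upwards [hae] with ω hω
    simp only [hF, dif_pos hi, Set.mem_preimage, ← hA' i hi, Set.mem_preimage, hω i]
  have hFmeas : ∀ i, i ∈ s →
      MeasurableSet[(inferInstance : MeasurableSpace β).comap (f i)] (F i) := by
    intro i hi
    exact ⟨A i hi, hA i hi, by simp [hF, dif_pos hi]⟩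
  have h1 : μ (⋂ i ∈ s, f' i) = μ (⋂ i ∈ s, F i) := by
    refine measure_congr ?_
    rw [Filter.eventuallyEq_set]
    have hall : ∀ᵐ ω ∂μ, ∀ i, i ∈ s → (ω ∈ f' i ↔ ω ∈ F i) := by
      rw [ae_all_iff]
      intro i
      by_cases hi : i ∈ s
      · filter_upwards [Filter.eventuallyEq_set.1 (hFae i hi)] with ω hω
        exact fun _ => hω
      · filter_upwards with ω hi' using absurd hi' hi
    filter_upwards [hall] with ω hω
    simp only [Set.mem_iInter]
    exact ⟨fun h i hi => (hω i hi).1 (h i hi), fun h i hi => (hω i hi).2 (h i hi)⟩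
  rw [h1, hf s hFmeas]
  refine Finset.prod_congr rfl fun i hi => ?_
  exact (measure_congr (hFae i hi)).symm

lemma css_coord_le_norm {m : ℕ} (x : EuclideanSpace ℝ (Fin m)) (k : Fin m) :
    |x k| ≤ ‖x‖ := by
  rw [EuclideanSpace.norm_eq, ← Real.sqrt_sq_eq_abs]
  refine Real.sqrt_le_sqrt ?_
  refine Finset.single_le_sum (f := fun i => ‖x i‖ ^ 2) (fun i _ => sq_nonneg _)
    (Finset.mem_univ k) |>.trans_eq' ?_
  rw [Real.norm_eq_abs, sq_abs]


set_option maxHeartbeats 1000000 in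
/-- Theorem 3, part 2, sure screening, fixed-sample form: with threshold
`γ_n = (c₂/4) n^{−κ}`, every index in `M` survives the screening threshold with
probability at least `1 − 2w(q+1)exp(−c₃ n^{1−2κ}) − ε₂`. -/
theorem coxcs_sure_screening {Ω : Type*} [MeasurableSpace Ω] (μ : Measure Ω)
    [IsProbabilityMeasure μ] {ι : Type*} (M : Finset ι) (n q : ℕ)
    (M₀ c₂ K₂ κ ε₁ ε₂ : ℝ)
    (θ : ι → EuclideanSpace ℝ (Fin (q + 1)))
    (θhat : ι → Ω → EuclideanSpace ℝ (Fin (q + 1)))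
    (Vhat : ι → Ω → EuclideanSpace ℝ (Fin (q + 1)))   -- `V̂_j(θ̂_j)`
    (Vθ : ι → Ω → EuclideanSpace ℝ (Fin (q + 1)))     -- `V̂_j(θ_j)`
    (W : Fin n → ι → Ω → EuclideanSpace ℝ (Fin (q + 1)))
    (Δ : ι → Ω → EuclideanSpace ℝ (Fin (q + 1)))
    (hn : 1 ≤ n) (hM₀ : 0 < M₀) (hc₂ : 0 < c₂) (hK₂ : 0 < K₂)
    (hκ0 : 0 < κ) (hκ : κ < 1 / 2)
    (hε₁0 : 0 < ε₁) (hε₁ : ε₁ ≤ (n : ℝ) ^ (-κ) / 2) (hε₂ : 0 ≤ ε₂)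
    (hnκ : (n : ℝ) ^ (-κ) ≤ 6 / (K₂ * M₀ * c₂))
    -- (ii) the sample score vanishes at `θ̂_j` and the inversion condition holds
    (hzero : ∀ j ∈ M, ∀ᵐ ω ∂μ, Vhat j ω = 0)
    (hinv : ∀ j ∈ M, ∀ᵐ ω ∂μ,
      M₀ * ‖θhat j ω - θ j‖ ≤ ‖Vhat j ω - Vθ j ω‖)
    -- (iii) i.i.d.-plus-remainder representation of the sample score at `θ_j`
    (hrep : ∀ j ∈ M, ∀ ω, Vθ j ω = (n : ℝ)⁻¹ • (∑ i, W i j ω) + Δ j ω)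
    (hindep : ∀ j ∈ M, iIndepFun (fun i => W i j) μ)
    (hident : ∀ j ∈ M, ∀ i i' : Fin n, IdentDistrib (W i j) (W i' j) μ μ)
    (hmean : ∀ j ∈ M, ∀ (i : Fin n) (k : Fin (q + 1)), ∫ ω, W i j ω k ∂μ = 0)
    (hbdd : ∀ j ∈ M, ∀ (i : Fin n) (k : Fin (q + 1)), ∀ᵐ ω ∂μ, |W i j ω k| ≤ K₂)
    -- (iv) the remainders are uniformly small with probability at least `1 − ε₂`
    (hΔ : μ {ω | ∃ j ∈ M, M₀ * c₂ * ε₁ / 2 < ‖Δ j ω‖} ≤ ENNReal.ofReal ε₂)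
    -- the population coefficients are bounded away from zero
    (hβ : ∀ j ∈ M, c₂ * (n : ℝ) ^ (-κ) ≤ |θ j (Fin.last q)|) :
    1 - ENNReal.ofReal
          (2 * M.card * (q + 1) *
            Real.exp (-(M₀ ^ 2 * c₂ ^ 2 / (32 * (q + 1) * (K₂ ^ 2 + 1)))
              * (n : ℝ) ^ (1 - 2 * κ)))
      - ENNReal.ofReal ε₂
      ≤ μ {ω | ∀ j ∈ M, c₂ / 4 * (n : ℝ) ^ (-κ) < |θhat j ω (Fin.last q)|} := by
  have hn0 : 0 < n := hn
  have hnR : (0:ℝ) < n := by exact_mod_cast hn0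
  set r : ℝ := (n : ℝ) ^ (-κ) with hr_def
  have hr : 0 < r := Real.rpow_pos_of_pos hnR _
  set sq : ℝ := Real.sqrt (q + 1) with hsq_def
  have hsq : 0 < sq := Real.sqrt_pos.2 (by positivity)
  have hsq2 : sq ^ 2 = (q : ℝ) + 1 := by
    rw [hsq_def, Real.sq_sqrt (by positivity)]
  set c : ℝ := M₀ * c₂ * r / (4 * sq) with hc_def
  have hcpos : 0 < c := by positivity
  set Etar : ℝ := Real.exp (-(M₀ ^ 2 * c₂ ^ 2 / (32 * ((q:ℝ) + 1) * (K₂ ^ 2 + 1)))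
      * (n : ℝ) ^ (1 - 2 * κ)) with hEtar_def
  have hEtar_pos : 0 < Etar := Real.exp_pos _
  -- power computation
  have hpow : (n : ℝ) ^ (1 - 2 * κ) = n * r ^ 2 := by
    rw [show (1 - 2 * κ : ℝ) = 1 + (-κ) * 2 by ring, Real.rpow_add hnR, Real.rpow_one,
      Real.rpow_mul hnR.le, Real.rpow_two]
  -- per (j,k) tail bound
  have hjk : ∀ j ∈ M, ∀ k : Fin (q + 1),
      μ {ω | (n : ℝ) * c < |∑ i, W i j ω k|} ≤ ENNReal.ofReal (2 * Etar) := by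
    intro j hj k
    have haem : ∀ i, AEMeasurable (W i j) μ := fun i => (hident j hj i i).aemeasurable_fst
    set W' : Fin n → Ω → EuclideanSpace ℝ (Fin (q + 1)) := fun i => (haem i).mk _ with hW'
    have hae : ∀ i, W i j =ᵐ[μ] W' i := fun i => (haem i).ae_eq_mk
    have hmeas' : ∀ i, Measurable (W' i) := fun i => (haem i).measurable_mk
    have hind' : iIndepFun W' μ :=
      css_iIndepFun_ae_eq hae (hindep j hj)
    set X : Fin n → Ω → ℝ := fun i ω => W' i ω k with hX
    have hXmeas : ∀ i, Measurable (X i) := fun i => (measurable_pi_apply k).comp ((WithLp.measurable_ofLp _ _).comp (hmeas' i))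
    have hXind : iIndepFun X μ :=
      hind'.comp (fun _ (x : EuclideanSpace ℝ (Fin (q + 1))) => x k)
        (fun _ => (measurable_pi_apply k).comp (WithLp.measurable_ofLp _ _))
    have hXb : ∀ i, ∀ᵐ ω ∂μ, |X i ω| ≤ K₂ := by
      intro i
      filter_upwards [hbdd j hj i k, hae i] with ω h1 h2
      rw [hX]; dsimp only; rw [← h2]; exact h1
    have hXm : ∀ i, ∫ ω, X i ω ∂μ = 0 := by
      intro i
      rw [← hmean j hj i k]
      refine integral_congr_ae ?_
      filter_upwards [hae i] with ω h
      rw [hX]; dsimp only; rw [h]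
    have hkey := css_chernoff_abs hn0 hXmeas hXind hK₂ hXb hXm
      (s := (n : ℝ) * c) (by positivity)
    have hsets : {ω | (n : ℝ) * c < |∑ i, W i j ω k|}
        =ᵐ[μ] {ω | (n : ℝ) * c < |∑ i, X i ω|} := by
      rw [Filter.eventuallyEq_set]
      filter_upwards [ae_all_iff.mpr hae] with ω hω
      have he : (∑ i, W i j ω k) = ∑ i, X i ω :=
        Finset.sum_congr rfl fun i _ => by rw [hX]; dsimp only; rw [hω i]
      simp only [Set.mem_setOf_eq, he]
    rw [measure_congr hsets]
    refine hkey.trans (ENNReal.ofReal_le_ofReal ?_)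
    have hexp_le : -(((n : ℝ) * c) ^ 2) / (2 * n * K₂ ^ 2)
        ≤ -(M₀ ^ 2 * c₂ ^ 2 / (32 * ((q:ℝ) + 1) * (K₂ ^ 2 + 1))) * (n : ℝ) ^ (1 - 2 * κ) := by
      rw [hpow, neg_div, neg_mul, neg_le_neg_iff]
      have hc2 : c ^ 2 = M₀ ^ 2 * c₂ ^ 2 * r ^ 2 / (16 * ((q:ℝ) + 1)) := by
        rw [hc_def, div_pow, mul_pow 4 sq, hsq2]
        ring
      have hq0 : ((q:ℝ) + 1) ≠ 0 := by positivity
      have hK₂' : K₂ ≠ 0 := hK₂.ne'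
      have hn' : (n:ℝ) ≠ 0 := hnR.ne'
      have heq : (((n : ℝ) * c) ^ 2) / (2 * n * K₂ ^ 2)
          = M₀ ^ 2 * c₂ ^ 2 / (32 * ((q:ℝ) + 1) * K₂ ^ 2) * ((n:ℝ) * r ^ 2) := by
        rw [mul_pow, hc2]
        field_simp
        ring
      rw [heq]
      refine mul_le_mul_of_nonneg_right ?_ (by positivity)
      rw [div_le_div_iff₀ (by positivity) (by positivity)]
      have hnn : (0:ℝ) ≤ M₀ ^ 2 * c₂ ^ 2 * (32 * ((q:ℝ) + 1)) := by positivity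
      nlinarith
    have hfin2 := Real.exp_le_exp.2 hexp_le
    rw [hEtar_def]
    linarith
  -- bad events
  set Abad : Set Ω := {ω | ∃ j ∈ M, M₀ * c₂ * ε₁ / 2 < ‖Δ j ω‖} with hAbad
  set Bbad : Set Ω := ⋃ j ∈ M, ⋃ k : Fin (q + 1),
    {ω | (n : ℝ) * c < |∑ i, W i j ω k|} with hBbad
  have hBbad_le : μ Bbad ≤ ENNReal.ofReal
      (2 * M.card * ((q : ℝ) + 1) * Etar) := by
    calc μ Bbad ≤ ∑ j ∈ M, μ (⋃ k : Fin (q + 1), {ω | (n : ℝ) * c < |∑ i, W i j ω k|}) :=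
          measure_biUnion_finset_le M _
      _ ≤ ∑ j ∈ M, ∑ k : Fin (q + 1), μ {ω | (n : ℝ) * c < |∑ i, W i j ω k|} :=
          Finset.sum_le_sum fun j _ => measure_iUnion_fintype_le μ _
      _ ≤ ∑ j ∈ M, ∑ _k : Fin (q + 1), ENNReal.ofReal (2 * Etar) :=
          Finset.sum_le_sum fun j hj => Finset.sum_le_sum fun k _ => hjk j hj k
      _ = (M.card : ENNReal) * ((q + 1 : ℕ) : ENNReal) * ENNReal.ofReal (2 * Etar) := by
          simp [Finset.sum_const, mul_assoc]
      _ = ENNReal.ofReal (2 * M.card * ((q : ℝ) + 1) * Etar) := by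
          rw [← ENNReal.ofReal_natCast M.card, ← ENNReal.ofReal_natCast (q + 1),
            ← ENNReal.ofReal_mul (by positivity), ← ENNReal.ofReal_mul (by positivity)]
          congr 1
          push_cast
          ring
  -- good event implies the target
  have hT : ∀ᵐ ω ∂μ, ∀ j ∈ M,
      Vhat j ω = 0 ∧ M₀ * ‖θhat j ω - θ j‖ ≤ ‖Vhat j ω - Vθ j ω‖ :=
    (ae_ball_iff M.countable_toSet).mpr fun j hj => (hzero j hj).and (hinv j hj)
  have hgood : ∀ᵐ ω ∂μ, ω ∈ (Abadᶜ ∩ Bbadᶜ) →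
      ω ∈ {ω | ∀ j ∈ M, c₂ / 4 * r < |θhat j ω (Fin.last q)|} := by
    filter_upwards [hT] with ω hω hG
    obtain ⟨hA, hB⟩ := hG
    intro j hj
    obtain ⟨hV0, hVinv⟩ := hω j hj
    have hΔω : ‖Δ j ω‖ ≤ M₀ * c₂ * ε₁ / 2 := by
      by_contra h
      exact hA ⟨j, hj, not_le.1 h⟩
    have hWω : ∀ k : Fin (q + 1), |(∑ i, W i j ω) k| ≤ (n : ℝ) * c := by
      intro k
      by_contra h
      refine hB ?_
      rw [hBbad]
      refine Set.mem_biUnion hj (Set.mem_iUnion.2 ⟨k, ?_⟩)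
      have he : (∑ i, W i j ω) k = ∑ i, W i j ω k := by
        rw [WithLp.ofLp_sum, Finset.sum_apply]
      simp only [Set.mem_setOf_eq]
      rw [← he]
      exact not_le.1 h
    -- norm of the sum
    have hvnorm : ‖∑ i, W i j ω‖ ≤ sq * ((n : ℝ) * c) := by
      rw [EuclideanSpace.norm_eq]
      have hsum_le : (∑ k : Fin (q + 1), ‖(∑ i, W i j ω) k‖ ^ 2)
          ≤ ∑ _k : Fin (q + 1), ((n : ℝ) * c) ^ 2 := by
        refine Finset.sum_le_sum fun k _ => ?_
        rw [Real.norm_eq_abs]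
        exact pow_le_pow_left₀ (abs_nonneg _) (hWω k) 2
      refine (Real.sqrt_le_sqrt hsum_le).trans (le_of_eq ?_)
      rw [Finset.sum_const, Finset.card_univ, Fintype.card_fin, nsmul_eq_mul,
        Real.sqrt_mul (by positivity), Real.sqrt_sq (by positivity)]
      rw [hsq_def]
      push_cast
      ring
    have hVθ : ‖Vθ j ω‖ ≤ M₀ * c₂ * r / 2 := by
      rw [hrep j hj ω]
      refine (norm_add_le _ _).trans ?_
      have h1 : ‖(n : ℝ)⁻¹ • (∑ i, W i j ω)‖ ≤ M₀ * c₂ * r / 4 := by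
        rw [norm_smul, Real.norm_eq_abs, abs_inv, Nat.abs_cast]
        calc (n : ℝ)⁻¹ * ‖∑ i, W i j ω‖ ≤ (n : ℝ)⁻¹ * (sq * ((n : ℝ) * c)) := by
              gcongr
          _ = sq * c := by
              rw [show sq * ((n:ℝ) * c) = (n:ℝ) * (sq * c) by ring,
                inv_mul_cancel_left₀ hnR.ne']
          _ = M₀ * c₂ * r / 4 := by
              rw [hc_def]; field_simp
      have h2 : ‖Δ j ω‖ ≤ M₀ * c₂ * r / 4 := by
        refine hΔω.trans ?_
        have h4 : M₀ * c₂ * ε₁ ≤ M₀ * c₂ * (r / 2) :=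
          mul_le_mul_of_nonneg_left hε₁ (by positivity)
        linarith
      linarith
    have hdist : ‖θhat j ω - θ j‖ ≤ c₂ * r / 2 := by
      have h3 : M₀ * ‖θhat j ω - θ j‖ ≤ ‖Vθ j ω‖ := by
        rw [hV0, zero_sub, norm_neg] at hVinv
        exact hVinv
      have h5 : M₀ * ‖θhat j ω - θ j‖ ≤ M₀ * (c₂ * r / 2) := by
        refine (h3.trans hVθ).trans (le_of_eq ?_)
        ring
      exact (mul_le_mul_iff_right₀ hM₀).mp h5
    have hco : |θhat j ω (Fin.last q) - θ j (Fin.last q)| ≤ ‖θhat j ω - θ j‖ := by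
      have he : (θhat j ω - θ j) (Fin.last q)
          = θhat j ω (Fin.last q) - θ j (Fin.last q) := PiLp.sub_apply _ _ _ _
      rw [← he]
      exact css_coord_le_norm _ _
    have hβj := hβ j hj
    have habs : |θ j (Fin.last q)| - |θhat j ω (Fin.last q)|
        ≤ |θ j (Fin.last q) - θhat j ω (Fin.last q)| := abs_sub_abs_le_abs_sub _ _
    rw [abs_sub_comm] at habs
    have h6 := hco.trans hdist
    have hcr : 0 < c₂ * r := by positivity
    linarith
  -- measure arithmetic
  have hGS : μ (Abadᶜ ∩ Bbadᶜ) ≤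
      μ {ω | ∀ j ∈ M, c₂ / 4 * r < |θhat j ω (Fin.last q)|} :=
    measure_mono_ae hgood
  have hunion : (1 : ℝ≥0∞) ≤ μ (Abadᶜ ∩ Bbadᶜ) + (μ Abad + μ Bbad) := by
    have h2 : (Set.univ : Set Ω) = (Abadᶜ ∩ Bbadᶜ) ∪ (Abad ∪ Bbad) := by
      rw [← Set.compl_union, Set.compl_union_self]
    calc (1 : ℝ≥0∞) = μ Set.univ := (measure_univ).symm
      _ = μ ((Abadᶜ ∩ Bbadᶜ) ∪ (Abad ∪ Bbad)) := by rw [← h2]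
      _ ≤ μ (Abadᶜ ∩ Bbadᶜ) + μ (Abad ∪ Bbad) := measure_union_le _ _
      _ ≤ μ (Abadᶜ ∩ Bbadᶜ) + (μ Abad + μ Bbad) := by
          gcongr
          exact measure_union_le _ _
  rw [tsub_le_iff_right, tsub_le_iff_right]
  calc (1 : ℝ≥0∞) ≤ μ (Abadᶜ ∩ Bbadᶜ) + (μ Abad + μ Bbad) := hunion
    _ ≤ μ {ω | ∀ j ∈ M, c₂ / 4 * r < |θhat j ω (Fin.last q)|}
        + (ENNReal.ofReal ε₂ + ENNReal.ofReal (2 * M.card * ((q : ℝ) + 1) * Etar)) := by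
          exact add_le_add hGS (add_le_add hΔ hBbad_le)
    _ = μ {ω | ∀ j ∈ M, c₂ / 4 * r < |θhat j ω (Fin.last q)|}
        + ENNReal.ofReal ε₂ + ENNReal.ofReal (2 * M.card * ((q : ℝ) + 1) * Etar) := by
          rw [add_assoc]
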